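/- Let S be a measurable space, A a nonempty finite set, P a Markov kernel from S × A to S, and r : S × A → [0, 1] a measurable reward function; for a bounded measurable f : S → ℝ write [Pf](s,a) = ∫_S f(s') P(ds' | s, a). Suppose there exist a constant J* ∈ ℝ and a bounded measurable function v* : S → ℝ satisfying the average-reward Bellman optimality equation J* + v*(s) = max_{a∈A} ( r(s,a) + [Pv*](s,a) ) for all s ∈ S. Let γ ∈ [0, 1) and suppose V : S → ℝ is a bounded measurable function satisfying the discounted Bellman optimality equation V(s) = max_{a∈A} ( r(s,a) + γ[PV](s,a) ) for all s ∈ S. Then |(1 − γ)V(s) − J*| ≤ (1 − γ)·sp(v*) for every s ∈ S, where sp(f) = sup_{s} f(s) − inf_{s} f(s). -/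

import Mathlib

open MeasureTheory ProbabilityTheory Finset

/-- Approximation bound (Lemma 2(ii) of Wei et al. 2020): if `(J*, v*)` solves the
average-reward Bellman optimality equation `J* + v*(s) = max_a (r(s,a) + [Pv*](s,a))` and
`V` solves the `γ`-discounted Bellman optimality equation
`V(s) = max_a (r(s,a) + γ[PV](s,a))` for a Markov kernel `P` and rewards `r ∈ [0,1]`,
then `|(1 − γ)V(s) − J*| ≤ (1 − γ)·sp(v*)` for every `s`, where
`sp(f) = sup_s f(s) − inf_s f(s)`. -/
theorem stmt_13 {S A : Type*} [MeasurableSpace S] [Nonempty S]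
    [MeasurableSpace A] [Fintype A] [Nonempty A]
    (P : Kernel (S × A) S) [IsMarkovKernel P]
    (r : S → A → ℝ) (hr : ∀ s a, r s a ∈ Set.Icc (0 : ℝ) 1)
    (hrm : Measurable fun p : S × A => r p.1 p.2)
    (J : ℝ) (v : S → ℝ) (hv : Measurable v) (Cv : ℝ) (hvb : ∀ s, |v s| ≤ Cv)
    (hbell : ∀ s, J + v s = Finset.univ.sup' Finset.univ_nonempty
      (fun a => r s a + ∫ s', v s' ∂(P (s, a))))
    (γ : ℝ) (hγ : γ ∈ Set.Ico (0 : ℝ) 1)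
    (V : S → ℝ) (hV : Measurable V) (CV : ℝ) (hVb : ∀ s, |V s| ≤ CV)
    (hbellV : ∀ s, V s = Finset.univ.sup' Finset.univ_nonempty
      (fun a => r s a + γ * ∫ s', V s' ∂(P (s, a)))) :
    ∀ s : S, |(1 - γ) * V s - J| ≤ (1 - γ) * ((⨆ s', v s') - (⨅ s', v s')) := by
  obtain ⟨hγ0, hγ1⟩ := hγ
  have h1γ : (0:ℝ) ≤ 1 - γ := by linarith
  set M := ⨆ s', v s' with hMdef
  set m := ⨅ s', v s' with hmdef
  have hbddv : BddAbove (Set.range v) :=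
    ⟨Cv, by rintro _ ⟨s, rfl⟩; exact (abs_le.mp (hvb s)).2⟩
  have hbddv' : BddBelow (Set.range v) :=
    ⟨-Cv, by rintro _ ⟨s, rfl⟩; exact (abs_le.mp (hvb s)).1⟩
  have hM : ∀ s, v s ≤ M := fun s => le_ciSup hbddv s
  have hm : ∀ s, m ≤ v s := fun s => ciInf_le hbddv' s
  set f := fun s => V s - v s with hfdef
  have hfb : ∀ s, |f s| ≤ CV + Cv := fun s => by
    have h1 := abs_le.mp (hVb s); have h2 := abs_le.mp (hvb s)
    rw [abs_le]; constructor <;> simp only [hfdef] <;> linarith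
  have hbddf : BddAbove (Set.range f) :=
    ⟨CV + Cv, by rintro _ ⟨s, rfl⟩; exact (abs_le.mp (hfb s)).2⟩
  have hbddf' : BddBelow (Set.range f) :=
    ⟨-(CV + Cv), by rintro _ ⟨s, rfl⟩; exact (abs_le.mp (hfb s)).1⟩
  set D := ⨆ s, f s with hDdef
  set d := ⨅ s, f s with hddef
  have hD : ∀ s, f s ≤ D := fun s => le_ciSup hbddf s
  have hd : ∀ s, d ≤ f s := fun s => ciInf_le hbddf' s
  have hvint : ∀ (s : S) (a : A), Integrable v (P (s, a)) := fun s a =>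
    (integrable_const Cv).mono' hv.aestronglyMeasurable
      (ae_of_all _ fun x => by simpa [Real.norm_eq_abs] using hvb x)
  have hVint : ∀ (s : S) (a : A), Integrable V (P (s, a)) := fun s a =>
    (integrable_const CV).mono' hV.aestronglyMeasurable
      (ae_of_all _ fun x => by simpa [Real.norm_eq_abs] using hVb x)
  have hfint : ∀ (s : S) (a : A), Integrable f (P (s, a)) := fun s a =>
    (hVint s a).sub (hvint s a)
  have hintv_le : ∀ (s : S) (a : A), ∫ s', v s' ∂(P (s, a)) ≤ M := fun s a => by
    calc ∫ s', v s' ∂(P (s, a)) ≤ ∫ _, M ∂(P (s, a)) :=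
          integral_mono (hvint s a) (integrable_const M) hM
      _ = M := by simp
  have hintv_ge : ∀ (s : S) (a : A), m ≤ ∫ s', v s' ∂(P (s, a)) := fun s a => by
    calc m = ∫ _, m ∂(P (s, a)) := by simp
      _ ≤ ∫ s', v s' ∂(P (s, a)) := integral_mono (integrable_const m) (hvint s a) hm
  have hintf_le : ∀ (s : S) (a : A), ∫ s', f s' ∂(P (s, a)) ≤ D := fun s a => by
    calc ∫ s', f s' ∂(P (s, a)) ≤ ∫ _, D ∂(P (s, a)) :=
          integral_mono (hfint s a) (integrable_const D) hD
      _ = D := by simp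
  have hintf_ge : ∀ (s : S) (a : A), d ≤ ∫ s', f s' ∂(P (s, a)) := fun s a => by
    calc d = ∫ _, d ∂(P (s, a)) := by simp
      _ ≤ ∫ s', f s' ∂(P (s, a)) := integral_mono (integrable_const d) (hfint s a) hd
  have key1 : ∀ s, f s ≤ J + γ * D - (1 - γ) * m := fun s => by
    obtain ⟨a, -, ha⟩ := Finset.exists_mem_eq_sup' Finset.univ_nonempty
      (fun a => r s a + γ * ∫ s', V s' ∂(P (s, a)))
    have hVs : V s = r s a + γ * ∫ s', V s' ∂(P (s, a)) := by rw [hbellV s, ha]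
    have hvs : r s a + ∫ s', v s' ∂(P (s, a)) ≤ J + v s := by
      rw [hbell s]
      exact Finset.le_sup' (fun a => r s a + ∫ s', v s' ∂(P (s, a)))
        (Finset.mem_univ a)
    have hsub : ∫ s', f s' ∂(P (s, a)) =
        (∫ s', V s' ∂(P (s, a))) - ∫ s', v s' ∂(P (s, a)) :=
      integral_sub (hVint s a) (hvint s a)
    have h1 := hintf_le s a
    have h2 := hintv_ge s a
    have hfs : f s = V s - v s := rfl
    nlinarith [mul_le_mul_of_nonneg_left h1 hγ0, mul_le_mul_of_nonneg_left h2 h1γ]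
  have key2 : ∀ s, J + γ * d - (1 - γ) * M ≤ f s := fun s => by
    obtain ⟨a, -, ha⟩ := Finset.exists_mem_eq_sup' Finset.univ_nonempty
      (fun a => r s a + ∫ s', v s' ∂(P (s, a)))
    have hvs : J + v s = r s a + ∫ s', v s' ∂(P (s, a)) := by rw [hbell s, ha]
    have hVs : r s a + γ * ∫ s', V s' ∂(P (s, a)) ≤ V s := by
      rw [hbellV s]
      exact Finset.le_sup' (fun a => r s a + γ * ∫ s', V s' ∂(P (s, a)))
        (Finset.mem_univ a)
    have hsub : ∫ s', f s' ∂(P (s, a)) =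
        (∫ s', V s' ∂(P (s, a))) - ∫ s', v s' ∂(P (s, a)) :=
      integral_sub (hVint s a) (hvint s a)
    have h1 := hintf_ge s a
    have h2 := hintv_le s a
    have hfs : f s = V s - v s := rfl
    nlinarith [mul_le_mul_of_nonneg_left h1 hγ0, mul_le_mul_of_nonneg_left h2 h1γ]
  have hDle : (1 - γ) * D ≤ J - (1 - γ) * m := by
    have : D ≤ J + γ * D - (1 - γ) * m := ciSup_le key1
    linarith
  have hdge : J - (1 - γ) * M ≤ (1 - γ) * d := by
    have : J + γ * d - (1 - γ) * M ≤ d := le_ciInf key2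
    linarith
  intro s
  have hfs : (V s : ℝ) = f s + v s := by simp [hfdef]
  have hu1 := mul_le_mul_of_nonneg_left (hD s) h1γ
  have hu2 := mul_le_mul_of_nonneg_left (hM s) h1γ
  have hl1 := mul_le_mul_of_nonneg_left (hd s) h1γ
  have hl2 := mul_le_mul_of_nonneg_left (hm s) h1γ
  rw [abs_le]
  constructor <;> nlinarith
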